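/- Let n ≥ 1 and let IP_n : ((Fin n → Bool) × (Fin n → Bool)) → Bool be the inner product function IP_n(x, y) = XOR over i ∈ Fin n of (x_i AND y_i). Then every combinatorial rectangle R = A × B, where A and B are sets of assignments Fin n → Bool, that is monochromatic with respect to IP_n has size |A| · |B| ≤ 2^n. -/
import Mathlib

/-- The inner product function `IP n (x, y) = ⊕_{i ∈ Fin n} (x i && y i)`. -/
def IP (n : ℕ) (p : (Fin n → Bool) × (Fin n → Bool)) : Bool :=
  decide (Odd ((Finset.univ.filter fun i : Fin n => (p.1 i && p.2 i) = true).card))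

section aux
variable {n : ℕ}

/-- Embed Boolean vectors into `Fin n → ZMod 2`. -/
def Ebv (x : Fin n → Bool) : Fin n → ZMod 2 := fun i => if x i then 1 else 0

lemma Ebv_injective : Function.Injective (Ebv (n := n)) := by
  intro x y h
  funext i
  have := congrFun h i
  by_cases hx : x i <;> by_cases hy : y i <;> simp_all [Ebv]

/-- The standard bilinear form on `Fin n → ZMod 2`. -/
noncomputable def bf (n : ℕ) :
    (Fin n → ZMod 2) →ₗ[ZMod 2] (Fin n → ZMod 2) →ₗ[ZMod 2] ZMod 2 :=
  LinearMap.mk₂ (ZMod 2) (fun x y => ∑ i, x i * y i)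
    (fun x x' y => by simp [add_mul, Finset.sum_add_distrib])
    (fun c x y => by simp [Finset.mul_sum, mul_assoc])
    (fun x y y' => by simp [mul_add, Finset.sum_add_distrib])
    (fun c x y => by simp [Finset.mul_sum, mul_assoc, mul_left_comm])

lemma bf_apply (x y : Fin n → ZMod 2) : bf n x y = ∑ i, x i * y i := rfl

lemma bf_comm (x y : Fin n → ZMod 2) : bf n x y = bf n y x := by
  simp [bf_apply, mul_comm]

lemma bf_injective : Function.Injective (bf n) := by
  intro x y h
  funext j
  have h2 : bf n x (Pi.single j 1) = bf n y (Pi.single j 1) := by rw [h]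
  simpa [bf_apply, Pi.single_apply, mul_ite, Finset.sum_ite_eq'] using h2

lemma natCast_zmod_two (m : ℕ) : (m : ZMod 2) = if Odd m then 1 else 0 := by
  rcases Nat.mod_two_eq_zero_or_one m with h | h <;>
    rw [← ZMod.natCast_mod m 2, h] <;> simp [Nat.odd_iff, h]

lemma bf_Ebv (x y : Fin n → Bool) :
    bf n (Ebv x) (Ebv y) = if IP n (x, y) = true then 1 else 0 := by
  have : bf n (Ebv x) (Ebv y) =
      ((Finset.univ.filter fun i : Fin n => (x i && y i) = true).card : ZMod 2) := by
    rw [bf_apply, ← Finset.sum_boole]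
    apply Finset.sum_congr rfl
    intro i _
    by_cases hx : x i <;> by_cases hy : y i <;> simp [Ebv, hx, hy]
  rw [this, natCast_zmod_two, IP]
  simp

end aux

/-- Every combinatorial rectangle `A × B` that is monochromatic with respect to the
inner product function `IP n` has size `|A| · |B| ≤ 2 ^ n`. -/
theorem ip_monochromatic_rectangle_le (n : ℕ) (hn : 1 ≤ n)
    (A B : Set (Fin n → Bool)) (c : Bool)
    (hmono : ∀ x ∈ A, ∀ y ∈ B, IP n (x, y) = c) :
    A.ncard * B.ncard ≤ 2 ^ n := by
  rcases A.eq_empty_or_nonempty with rfl | ⟨x0, hx0⟩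
  · simp
  rcases B.eq_empty_or_nonempty with rfl | ⟨y0, hy0⟩
  · simp
  classical
  set v : ZMod 2 := if c = true then 1 else 0 with hv
  have hbf : ∀ x ∈ A, ∀ y ∈ B, bf n (Ebv x) (Ebv y) = v := by
    intro x hx y hy
    rw [bf_Ebv, hmono x hx y hy]
  -- the difference spans
  set SA : Submodule (ZMod 2) (Fin n → ZMod 2) :=
    Submodule.span (ZMod 2) ((fun x => Ebv x - Ebv x0) '' A) with hSA
  set SB : Submodule (ZMod 2) (Fin n → ZMod 2) :=
    Submodule.span (ZMod 2) ((fun y => Ebv y - Ebv y0) '' B) with hSB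
  -- orthogonality of generators
  have horth : ∀ y ∈ B, ∀ x ∈ A, bf n (Ebv y - Ebv y0) (Ebv x - Ebv x0) = 0 := by
    intro y hy x hx
    simp only [map_sub, LinearMap.sub_apply]
    rw [bf_comm, hbf x hx y hy, bf_comm _ (Ebv x0), hbf x0 hx0 y hy,
      bf_comm, hbf x hx y0 hy0, bf_comm _ (Ebv x0), hbf x0 hx0 y0 hy0]
    ring
  have key : ∀ x ∈ A, ∀ w ∈ SB, bf n w (Ebv x - Ebv x0) = 0 := by
    intro x hx w hw
    induction hw using Submodule.span_induction with
    | mem z hz =>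
      obtain ⟨y, hy, rfl⟩ := hz
      exact horth y hy x hx
    | zero => simp
    | add a b _ _ ha hb => simp [ha, hb]
    | smul r a _ ha => simp [ha]
  -- SA is contained in the dual coannihilator of (bf n).map SB
  have hle : SA ≤ (SB.map (bf n)).dualCoannihilator := by
    rw [hSA, Submodule.span_le]
    rintro _ ⟨x, hx, rfl⟩
    rw [SetLike.mem_coe, Submodule.mem_dualCoannihilator]
    rintro φ hφ
    obtain ⟨w, hw, rfl⟩ := Submodule.mem_map.mp hφ
    exact key x hx w hw
  -- dimension count
  have hdim : Module.finrank (ZMod 2) SA + Module.finrank (ZMod 2) SB ≤ n := by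
    have h1 : Module.finrank (ZMod 2) (SB.map (bf n)) = Module.finrank (ZMod 2) SB :=
      (LinearEquiv.finrank_eq (Submodule.equivMapOfInjective _ bf_injective SB)).symm
    have h2 := Subspace.finrank_add_finrank_dualCoannihilator_eq (SB.map (bf n))
    have h3 : Module.finrank (ZMod 2) SA ≤
        Module.finrank (ZMod 2) (SB.map (bf n)).dualCoannihilator :=
      Submodule.finrank_mono hle
    have h4 : Module.finrank (ZMod 2) (Fin n → ZMod 2) = n := by
      simp
    rw [h1, h4] at h2
    omega
  -- cardinalities
  have cardS : ∀ S : Submodule (ZMod 2) (Fin n → ZMod 2),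
      Nat.card S = 2 ^ Module.finrank (ZMod 2) S := by
    intro S
    rw [Nat.card_eq_fintype_card, Module.card_eq_pow_finrank (K := ZMod 2), ZMod.card]
  have hA : A.ncard ≤ 2 ^ Module.finrank (ZMod 2) SA := by
    rw [← Nat.card_coe_set_eq, ← cardS SA]
    apply Nat.card_le_card_of_injective
      (fun a : A => (⟨Ebv a.1 - Ebv x0,
        Submodule.subset_span ⟨a.1, a.2, rfl⟩⟩ : SA))
    intro a b hab
    apply Subtype.ext
    apply Ebv_injective
    have := congrArg Subtype.val hab
    simpa [sub_left_inj] using this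
  have hB : B.ncard ≤ 2 ^ Module.finrank (ZMod 2) SB := by
    rw [← Nat.card_coe_set_eq, ← cardS SB]
    apply Nat.card_le_card_of_injective
      (fun b : B => (⟨Ebv b.1 - Ebv y0,
        Submodule.subset_span ⟨b.1, b.2, rfl⟩⟩ : SB))
    intro a b hab
    apply Subtype.ext
    apply Ebv_injective
    have := congrArg Subtype.val hab
    simpa [sub_left_inj] using this
  calc A.ncard * B.ncard
      ≤ 2 ^ Module.finrank (ZMod 2) SA * 2 ^ Module.finrank (ZMod 2) SB :=
        Nat.mul_le_mul hA hB
    _ = 2 ^ (Module.finrank (ZMod 2) SA + Module.finrank (ZMod 2) SB) := (pow_add 2 _ _).symm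
    _ ≤ 2 ^ n := Nat.pow_le_pow_right (by norm_num) hdim
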